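/- A preference relation ≿ on X that is permutation invariant and convex exhibits preference for naive diversification: for every n, all α, β ∈ 𝕊ⁿ with α majorized by β, and all x₁, …, x_n ∈ X, Σ_{i=1}^n α_i x_i ≿ Σ_{i=1}^n β_i x_i. -/

import Mathlib

open Finset Matrix

/-- Sum of the `k` largest components of a vector in `ℝⁿ`. -/
noncomputable def topSum {n : ℕ} (a : Fin n → ℝ) (k : ℕ) : ℝ :=
  sSup {t : ℝ | ∃ s : Finset (Fin n), s.card = k ∧ t = ∑ i ∈ s, a i}

/-- `Majorizes b a` means `b` majorizes `a`, i.e. `a ≤_m b`. -/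
def Majorizes {n : ℕ} (b a : Fin n → ℝ) : Prop :=
  (∑ i, a i = ∑ i, b i) ∧ ∀ k : ℕ, 1 ≤ k → k ≤ n - 1 → topSum a k ≤ topSum b k

/-- A permutation matrix. -/
def IsPermMatrix {n : ℕ} (P : Matrix (Fin n) (Fin n) ℝ) : Prop :=
  ∃ σ : Equiv.Perm (Fin n), ∀ i j, P i j = if σ i = j then 1 else 0

/-- A convex preference relation: `x ≿ y` implies `t x + (1-t) y ≿ y` for `t ∈ (0,1)`. -/
def ConvexPref {X : Type*} [AddCommGroup X] [Module ℝ X] (pref : X → X → Prop) : Prop :=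
  ∀ x y : X, pref x y → ∀ t : ℝ, 0 < t → t < 1 → pref (t • x + (1 - t) • y) y

/-- A permutation invariant preference relation. -/
def PermInvariant {X : Type*} [AddCommGroup X] [Module ℝ X] (pref : X → X → Prop) : Prop :=
  ∀ (n : ℕ) (a : Fin n → ℝ), a ∈ stdSimplex ℝ (Fin n) →
    ∀ P : Matrix (Fin n) (Fin n) ℝ, IsPermMatrix P → ∀ x : Fin n → X,
      pref (∑ i, a i • x i) (∑ i, (a ᵥ* P) i • x i) ∧
        pref (∑ i, (a ᵥ* P) i • x i) (∑ i, a i • x i)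

namespace NaiveDivAux

variable {n : ℕ}

lemma topSumSet_bdd (a : Fin n → ℝ) (k : ℕ) :
    BddAbove {t : ℝ | ∃ s : Finset (Fin n), s.card = k ∧ t = ∑ i ∈ s, a i} := by
  apply Set.Finite.bddAbove
  apply Set.Finite.subset (Set.finite_range (fun s : Finset (Fin n) => ∑ i ∈ s, a i))
  rintro t ⟨s, -, rfl⟩
  exact ⟨s, rfl⟩

lemma le_topSum (a : Fin n → ℝ) {k : ℕ} {s : Finset (Fin n)} (hs : s.card = k) :
    ∑ i ∈ s, a i ≤ topSum a k :=
  le_csSup (topSumSet_bdd a k) ⟨s, hs, rfl⟩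

lemma topSum_le (a : Fin n → ℝ) {k : ℕ} (hk : k ≤ n) {c : ℝ}
    (h : ∀ s : Finset (Fin n), s.card = k → ∑ i ∈ s, a i ≤ c) : topSum a k ≤ c := by
  apply csSup_le
  · obtain ⟨s, -, hs⟩ := Finset.exists_subset_card_eq (s := (Finset.univ : Finset (Fin n)))
      (n := k) (by simpa using hk)
    exact ⟨∑ i ∈ s, a i, s, hs, rfl⟩
  · rintro t ⟨s, hs, rfl⟩; exact h s hs

lemma topSum_comp_perm_le (a : Fin n → ℝ) (σ : Equiv.Perm (Fin n)) (k : ℕ) :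
    topSum (a ∘ σ) k ≤ topSum a k := by
  rcases le_or_gt k n with hk | hk
  · apply topSum_le _ hk
    intro s hs
    have : ∑ i ∈ s, a (σ i) = ∑ j ∈ s.map σ.toEmbedding, a j := by
      rw [Finset.sum_map]; rfl
    rw [show ∑ i ∈ s, (a ∘ σ) i = ∑ i ∈ s, a (σ i) from rfl, this]
    exact le_topSum a (by rw [Finset.card_map, hs])
  · have h1 : ∀ b : Fin n → ℝ,
        {t : ℝ | ∃ s : Finset (Fin n), s.card = k ∧ t = ∑ i ∈ s, b i} = ∅ := by
      intro b
      ext t; simp only [Set.mem_setOf_eq, Set.mem_empty_iff_false, iff_false]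
      rintro ⟨s, hs, -⟩
      exact absurd (hs ▸ Finset.card_le_card (Finset.subset_univ s)) (by simpa using hk.not_ge)
    rw [topSum, topSum, h1, h1]

lemma topSum_comp_perm (a : Fin n → ℝ) (σ : Equiv.Perm (Fin n)) (k : ℕ) :
    topSum (a ∘ σ) k = topSum a k := by
  refine le_antisymm (topSum_comp_perm_le a σ k) ?_
  have := topSum_comp_perm_le (a ∘ σ) σ⁻¹ k
  simpa [Function.comp_def] using this

lemma strictMono_fin_le {k : ℕ} {g : Fin k → Fin n} (hg : StrictMono g) :
    ∀ m : ℕ, ∀ h : m < k, m ≤ (g ⟨m, h⟩ : ℕ) := by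
  intro m
  induction m with
  | zero => intro h; exact Nat.zero_le _
  | succ m ih =>
    intro h
    have h1 : m < k := Nat.lt_of_succ_lt h
    have h2 : (⟨m, h1⟩ : Fin k) < ⟨m + 1, h⟩ := by simp [Fin.lt_def]
    have := hg h2
    have := ih h1
    omega

lemma filter_lt_eq_map {k : ℕ} (hk : k ≤ n) :
    Finset.univ.filter (fun i : Fin n => (i : ℕ) < k) =
      Finset.map (Fin.castLEEmb hk) Finset.univ := by
  ext j
  simp only [Finset.mem_filter, Finset.mem_univ, true_and, Finset.mem_map,
    Fin.castLEEmb_apply]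
  constructor
  · intro hj; exact ⟨⟨j, hj⟩, rfl⟩
  · rintro ⟨i, -, rfl⟩; exact i.2

def partSum (a : Fin n → ℝ) (k : ℕ) : ℝ :=
  ∑ i ∈ Finset.univ.filter (fun i : Fin n => (i : ℕ) < k), a i

lemma partSum_eq {k : ℕ} (hk : k ≤ n) (a : Fin n → ℝ) :
    partSum a k = ∑ i : Fin k, a (Fin.castLE hk i) := by
  rw [partSum, filter_lt_eq_map hk, Finset.sum_map]
  rfl

lemma card_filter_lt {k : ℕ} (hk : k ≤ n) :
    (Finset.univ.filter (fun i : Fin n => (i : ℕ) < k)).card = k := by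
  rw [filter_lt_eq_map hk, Finset.card_map, Finset.card_univ, Fintype.card_fin]

lemma partSum_zero (a : Fin n → ℝ) : partSum a 0 = 0 := by
  simp [partSum]

lemma partSum_of_le {k : ℕ} (hk : n ≤ k) (a : Fin n → ℝ) : partSum a k = ∑ i, a i := by
  rw [partSum]
  congr 1
  rw [Finset.filter_true_of_mem]
  intro i _
  exact lt_of_lt_of_le i.2 hk

lemma partSum_succ (a : Fin n → ℝ) {k : ℕ} (hk : k < n) :
    partSum a (k + 1) = partSum a k + a ⟨k, hk⟩ := by
  have h : Finset.univ.filter (fun i : Fin n => (i : ℕ) < k + 1) =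
      insert ⟨k, hk⟩ (Finset.univ.filter (fun i : Fin n => (i : ℕ) < k)) := by
    ext i
    simp only [Finset.mem_filter, Finset.mem_univ, true_and, Finset.mem_insert, Fin.ext_iff]
    omega
  rw [partSum, h, Finset.sum_insert (by simp), partSum, add_comm]

/-- For an antitone vector, the top-k sum is the sum of the first k entries. -/
lemma topSum_of_antitone {a : Fin n → ℝ} (ha : Antitone a) {k : ℕ} (hk : k ≤ n) :
    topSum a k = partSum a k := by
  refine le_antisymm ?_ ?_
  · apply topSum_le a hk
    intro s hs
    have hsum : ∑ i ∈ s, a i = ∑ i : Fin k, a (s.orderEmbOfFin hs i) := by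
      have hmap : s = Finset.map (s.orderEmbOfFin hs).toEmbedding Finset.univ := by
        ext j
        simp only [Finset.mem_map, RelEmbedding.coe_toEmbedding, Finset.mem_univ, true_and]
        constructor
        · intro hj
          have : j ∈ Set.range (s.orderEmbOfFin hs) := by
            rw [Finset.range_orderEmbOfFin]; exact hj
          obtain ⟨i, hi⟩ := this
          exact ⟨i, hi⟩
        · rintro ⟨i, rfl⟩
          exact Finset.orderEmbOfFin_mem s hs i
      have h2 := Finset.sum_map Finset.univ (s.orderEmbOfFin hs).toEmbedding a
      rw [← hmap] at h2
      exact h2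
    rw [hsum, partSum_eq hk]
    apply Finset.sum_le_sum
    intro i _
    apply ha
    show ((Fin.castLE hk i : Fin n) : ℕ) ≤ _
    simpa using strictMono_fin_le (s.orderEmbOfFin hs).strictMono i (i.2)
  · rw [partSum]
    exact le_topSum a (card_filter_lt hk)

/-- permutation matrices act on the right as `a ↦ a ∘ σ` (for the right σ). -/
lemma vecMul_permMatrix (a : Fin n → ℝ) (τ : Equiv.Perm (Fin n)) (j : Fin n) :
    (a ᵥ* fun i j => if τ i = j then (1 : ℝ) else 0) j = a (τ⁻¹ j) := by
  show a ⬝ᵥ (fun i => if τ i = j then (1 : ℝ) else 0) = _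
  simp only [dotProduct]
  have : ∀ i, a i * (if τ i = j then (1:ℝ) else 0) = if i = τ⁻¹ j then a i else 0 := by
    intro i
    rcases eq_or_ne i (τ⁻¹ j) with rfl | h
    · simp
    · rw [if_neg, if_neg h, mul_zero]
      intro hc
      exact h (by rw [← hc]; simp)
  rw [Finset.sum_congr rfl (fun i _ => this i), Finset.sum_ite_eq' Finset.univ (τ⁻¹ j) a]
  simp

lemma simplex_comp_perm {a : Fin n → ℝ} (ha : a ∈ stdSimplex ℝ (Fin n))
    (σ : Equiv.Perm (Fin n)) : (a ∘ σ) ∈ stdSimplex ℝ (Fin n) := by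
  refine ⟨fun i => ha.1 _, ?_⟩
  rw [show ∑ i, (a ∘ σ) i = ∑ i, a (σ i) from rfl, Equiv.sum_comp σ a]
  exact ha.2

end NaiveDivAux

section Main

variable {X : Type*} [AddCommGroup X] [Module ℝ X] (pref : X → X → Prop)

lemma pref_perm (hPI : PermInvariant pref) {n : ℕ} {a : Fin n → ℝ}
    (ha : a ∈ stdSimplex ℝ (Fin n)) (σ : Equiv.Perm (Fin n)) (x : Fin n → X) :
    pref (∑ i, a i • x i) (∑ i, a (σ i) • x i) ∧
      pref (∑ i, a (σ i) • x i) (∑ i, a i • x i) := by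
  have hP : IsPermMatrix (fun i j => if σ⁻¹ i = j then (1:ℝ) else 0) := ⟨σ⁻¹, fun i j => rfl⟩
  have h := hPI n a ha _ hP x
  have he : ∀ i, (a ᵥ* fun i j => if σ⁻¹ i = j then (1:ℝ) else 0) i = a (σ i) := by
    intro i; rw [NaiveDivAux.vecMul_permMatrix]; simp
  simp only [he] at h
  exact h

open NaiveDivAux in
lemma key (htrans : ∀ x y z : X, pref x y → pref y z → pref x z)
    (hcomplete : ∀ x y : X, pref x y ∨ pref y x)
    (hPI : PermInvariant pref) (hConv : ConvexPref pref) {n : ℕ} (x : Fin n → X) :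
    ∀ d : ℕ, ∀ a b : Fin n → ℝ, Antitone a → Antitone b →
      a ∈ stdSimplex ℝ (Fin n) → b ∈ stdSimplex ℝ (Fin n) →
      (∑ i, a i = ∑ i, b i) →
      (∀ k : ℕ, partSum a k ≤ partSum b k) →
      (Finset.univ.filter fun m => a m ≠ b m).card ≤ d →
      pref (∑ i, a i • x i) (∑ i, b i • x i) := by
  intro d
  induction d with
  | zero =>
    intro a b _ _ _ _ _ _ hcard
    have hab : ∀ m, a m = b m := by
      intro m
      by_contra hm
      have : m ∈ Finset.univ.filter fun m => a m ≠ b m := by simp [hm]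
      have := Finset.card_pos.mpr ⟨m, this⟩
      omega
    have : (∑ i, a i • x i) = ∑ i, b i • x i := by
      apply Finset.sum_congr rfl
      intro m _; rw [hab m]
    rw [this]
    exact (hcomplete _ _).elim id id
  | succ d ih =>
    intro a b ha hb hsa hsb htot hpart hcard
    by_cases h0 : (Finset.univ.filter fun m => a m ≠ b m).card = 0
    · exact ih a b ha hb hsa hsb htot hpart (by omega)
    -- the set of indices where b < a is nonempty
    have hB : (Finset.univ.filter fun m => b m < a m).Nonempty := by
      by_contra hBe
      rw [Finset.not_nonempty_iff_eq_empty, Finset.filter_eq_empty_iff] at hBe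
      have hle : ∀ m : Fin n, a m ≤ b m := fun m => not_lt.mp (hBe (Finset.mem_univ m))
      obtain ⟨m0, hm0⟩ := Finset.card_pos.mp (Nat.pos_of_ne_zero h0)
      have hm0' : a m0 ≠ b m0 := (Finset.mem_filter.mp hm0).2
      have : ∑ i, a i < ∑ i, b i :=
        Finset.sum_lt_sum (fun i _ => hle i) ⟨m0, Finset.mem_univ _, lt_of_le_of_ne (hle m0) hm0'⟩
      linarith
    set j := (Finset.univ.filter fun m => b m < a m).min' hB with hjdef
    have hjB : b j < a j := (Finset.mem_filter.mp ((Finset.univ.filter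
      fun m => b m < a m).min'_mem hB)).2
    have hjmin : ∀ m, m < j → a m ≤ b m := by
      intro m hm
      by_contra hc
      have : m ∈ Finset.univ.filter fun m => b m < a m := by
        simp only [Finset.mem_filter, Finset.mem_univ, true_and]
        exact not_le.mp hc
      exact absurd (Finset.min'_le _ m this) (not_le.mpr hm)
    -- the set of disagreements before j is nonempty
    have hA : (Finset.univ.filter fun m => m < j ∧ a m ≠ b m).Nonempty := by
      by_contra hAe
      rw [Finset.not_nonempty_iff_eq_empty, Finset.filter_eq_empty_iff] at hAe
      have heq : ∀ m, m < j → a m = b m := by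
        intro m hm
        by_contra hc
        exact hAe (Finset.mem_univ m) ⟨hm, hc⟩
      have hjn : (j : ℕ) < n := j.2
      have h1 : partSum a ((j : ℕ) + 1) ≤ partSum b ((j : ℕ) + 1) := hpart _
      rw [partSum_succ a hjn, partSum_succ b hjn] at h1
      have h2 : partSum a (j : ℕ) = partSum b (j : ℕ) := by
        apply Finset.sum_congr rfl
        intro m hm
        exact heq m (by rw [Fin.lt_def]; exact (Finset.mem_filter.mp hm).2)
      rw [Fin.eta] at h1
      linarith
    set i := (Finset.univ.filter fun m => m < j ∧ a m ≠ b m).max' hA with hidef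
    have hiA : i < j ∧ a i ≠ b i := (Finset.mem_filter.mp ((Finset.univ.filter
      fun m => m < j ∧ a m ≠ b m).max'_mem hA)).2
    have hij : i < j := hiA.1
    have himax : ∀ m, i < m → m < j → a m = b m := by
      intro m h1 h2
      by_contra hc
      have : m ∈ Finset.univ.filter fun m => m < j ∧ a m ≠ b m := by
        simp only [Finset.mem_filter, Finset.mem_univ, true_and]
        exact ⟨h2, hc⟩
      exact absurd (Finset.le_max' _ m this) (not_le.mpr h1)
    have hai_bi : a i < b i := lt_of_le_of_ne (hjmin i hij) hiA.2
    have haij : a j ≤ a i := ha hij.le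
    set δ := min (b i - a i) (a j - b j) with hδdef
    have hδpos : 0 < δ := lt_min (by linarith) (by linarith)
    have hδ1 : δ ≤ b i - a i := min_le_left _ _
    have hδ2 : δ ≤ a j - b j := min_le_right _ _
    have hbibj : b j < b i := by linarith
    have hδlt : δ < b i - b j := by linarith
    have hne : b i - b j ≠ 0 := ne_of_gt (by linarith)
    have hijne : i ≠ j := ne_of_lt hij
    set b' := fun m => if m = i then b i - δ else if m = j then b j + δ else b m with hb'def
    have hb'i : b' i = b i - δ := by simp [hb'def]
    have hb'j : b' j = b j + δ := by simp [hb'def, hijne.symm]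
    have hb'other : ∀ m, m ≠ i → m ≠ j → b' m = b m := by
      intro m h1 h2; simp [hb'def, h1, h2]
    have hb'i_lb : a i ≤ b' i := by rw [hb'i]; linarith
    have hb'i_ub : b' i ≤ b i := by rw [hb'i]; linarith
    have hb'j_lb : b j ≤ b' j := by rw [hb'j]; linarith
    have hb'j_ub : b' j ≤ a j := by rw [hb'j]; linarith
    -- b' is antitone
    have hb' : Antitone b' := by
      intro m m' hmm'
      rcases eq_or_lt_of_le hmm' with rfl | hlt'
      · exact le_refl _
      by_cases hmi : m = i
      · subst hmi
        by_cases hm'j : m' = j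
        · subst hm'j
          exact hb'j_ub.trans (haij.trans hb'i_lb)
        · rw [hb'other m' (ne_of_gt hlt') hm'j]
          rcases lt_trichotomy m' j with h1 | rfl | h1
          · rw [← himax m' hlt' h1]
            exact (ha hlt'.le).trans hb'i_lb
          · exact absurd rfl hm'j
          · calc b m' ≤ b j := hb h1.le
              _ ≤ a j := hjB.le
              _ ≤ a i := haij
              _ ≤ b' i := hb'i_lb
      · by_cases hmj : m = j
        · subst hmj
          have h1 : m' ≠ i := fun hc => absurd (hc ▸ hlt') (by exact fun h => absurd (hij.trans h) (lt_irrefl _))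
          have h2 : m' ≠ j := ne_of_gt hlt'
          rw [hb'other m' h1 h2]
          exact (hb hlt'.le).trans hb'j_lb
        · rw [hb'other m hmi hmj]
          by_cases hm'i : m' = i
          · subst hm'i
            exact hb'i_ub.trans (hb hlt'.le)
          by_cases hm'j : m' = j
          · subst hm'j
            rcases lt_trichotomy m i with h1 | rfl | h1
            · calc b' j ≤ a j := hb'j_ub
                _ ≤ a i := haij
                _ ≤ b i := hai_bi.le
                _ ≤ b m := hb h1.le
            · exact absurd rfl hmi
            · have h2 : m < j := hlt'
              rw [← himax m h1 h2]
              exact hb'j_ub.trans (ha h2.le)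
          · rw [hb'other m' hm'i hm'j]
            exact hb hlt'.le
    -- decomposition b' = b + c
    set c := fun m => (if m = i then -δ else 0) + (if m = j then δ else 0) with hcdef
    have hb'c : ∀ m, b' m = b m + c m := by
      intro m
      by_cases h1 : m = i
      · subst h1; rw [hb'i]; simp [hcdef, hijne]; ring
      by_cases h2 : m = j
      · subst h2; rw [hb'j]; simp [hcdef, hijne.symm]
      · rw [hb'other m h1 h2]; simp [hcdef, h1, h2]
    have hsumc : ∀ s : Finset (Fin n), ∑ m ∈ s, b' m =
        (∑ m ∈ s, b m) + ((if i ∈ s then -δ else 0) + (if j ∈ s then δ else 0)) := by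
      intro s
      rw [Finset.sum_congr rfl (fun m _ => hb'c m), Finset.sum_add_distrib]
      congr 1
      rw [hcdef, Finset.sum_add_distrib]
      congr 1
      · exact Finset.sum_ite_eq' s i (fun _ => -δ)
      · exact Finset.sum_ite_eq' s j (fun _ => δ)
    -- total sum preserved
    have htotb' : ∑ m, b' m = ∑ m, b m := by
      rw [hsumc Finset.univ]
      simp
    -- b' in the simplex
    have hsb' : b' ∈ stdSimplex ℝ (Fin n) := by
      constructor
      · intro m
        by_cases h1 : m = i
        · subst h1; exact le_trans (hsa.1 i) hb'i_lb
        by_cases h2 : m = j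
        · subst h2; exact le_trans (hsb.1 j) hb'j_lb
        · rw [hb'other m h1 h2]; exact hsb.1 m
      · rw [htotb']; exact hsb.2
    -- partial sums
    have hpart' : ∀ k : ℕ, partSum a k ≤ partSum b' k := by
      intro k
      have hmem : ∀ m : Fin n, m ∈ Finset.univ.filter (fun i : Fin n => (i : ℕ) < k) ↔
          (m : ℕ) < k := by intro m; simp
      simp only [partSum]
      rw [hsumc]
      rcases show k ≤ (i : ℕ) ∨ ((i : ℕ) < k ∧ k ≤ (j : ℕ)) ∨ (j : ℕ) < k by omega with
        hk | ⟨hk1, hk2⟩ | hk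
      · rw [if_neg, if_neg]
        · simpa [partSum] using hpart k
        · rw [hmem]; omega
        · rw [hmem]
          have := hij
          rw [Fin.lt_def] at this
          omega
      · rw [if_pos ((hmem i).mpr hk1), if_neg (by rw [hmem]; omega)]
        have hsub : δ ≤ (∑ m ∈ Finset.univ.filter (fun i : Fin n => (i : ℕ) < k), b m)
            - ∑ m ∈ Finset.univ.filter (fun i : Fin n => (i : ℕ) < k), a m := by
          rw [← Finset.sum_sub_distrib]
          calc δ ≤ b i - a i := hδ1
            _ ≤ ∑ m ∈ Finset.univ.filter (fun i : Fin n => (i : ℕ) < k), (b m - a m) := by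
              apply Finset.single_le_sum (f := fun m => b m - a m)
              · intro m hm
                have hmk : (m : ℕ) < k := (hmem m).mp hm
                have hmj : m < j := by rw [Fin.lt_def]; omega
                linarith [hjmin m hmj]
              · exact (hmem i).mpr hk1
        linarith
      · rw [if_pos, if_pos]
        · simpa [partSum] using hpart k
        · rw [hmem]; omega
        · rw [hmem]
          have := hij
          rw [Fin.lt_def] at this
          omega
    -- cardinality decreases
    have hcard' : (Finset.univ.filter fun m => a m ≠ b' m).card ≤ d := by
      have hstep : ∀ m0 : Fin n, a m0 ≠ b m0 → b' m0 = a m0 →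
          (Finset.univ.filter fun m => a m ≠ b' m).card ≤ d := by
        intro m0 hm0ne hm0eq
        have hsub : (Finset.univ.filter fun m => a m ≠ b' m) ⊆
            (Finset.univ.filter fun m => a m ≠ b m).erase m0 := by
          intro m hm
          rw [Finset.mem_filter] at hm
          rw [Finset.mem_erase, Finset.mem_filter]
          have hmm0 : m ≠ m0 := by
            intro hc; subst hc; exact hm.2 hm0eq.symm
          refine ⟨hmm0, Finset.mem_univ m, ?_⟩
          by_cases h1 : m = i
          · subst h1; exact hai_bi.ne
          by_cases h2 : m = j
          · subst h2; exact hjB.ne'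
          · rw [← hb'other m h1 h2]; exact hm.2
        have h1 := Finset.card_le_card hsub
        have h2 : m0 ∈ Finset.univ.filter fun m => a m ≠ b m := by
          simp only [Finset.mem_filter, Finset.mem_univ, true_and]; exact hm0ne
        have h3 := Finset.card_erase_of_mem h2
        omega
      rcases min_choice (b i - a i) (a j - b j) with hmin | hmin
      · exact hstep i hai_bi.ne (by rw [hb'i, hδdef, hmin]; ring)
      · exact hstep j hjB.ne' (by rw [hb'j, hδdef, hmin]; ring)
    -- T-transform preference step
    set t := 1 - δ / (b i - b j) with htdef
    have h1t : (1 - t) * (b i - b j) = δ := by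
      rw [htdef]
      field_simp
      ring
    have ht0 : 0 < t := by
      rw [htdef]
      have : δ / (b i - b j) < 1 := (div_lt_one (by linarith)).mpr hδlt
      linarith
    have ht1 : t < 1 := by
      rw [htdef]
      have : 0 < δ / (b i - b j) := div_pos hδpos (by linarith)
      linarith
    have hb'eq : ∀ m, b' m = t * b m + (1 - t) * b (Equiv.swap i j m) := by
      intro m
      by_cases h1 : m = i
      · subst h1
        rw [Equiv.swap_apply_left, hb'i]
        have : t * b i + (1 - t) * b j = b i - (1 - t) * (b i - b j) := by ring
        rw [this, h1t]
      by_cases h2 : m = j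
      · subst h2
        rw [Equiv.swap_apply_right, hb'j]
        have : t * b j + (1 - t) * b i = b j + (1 - t) * (b i - b j) := by ring
        rw [this, h1t]
      · rw [Equiv.swap_apply_of_ne_of_ne h1 h2, hb'other m h1 h2]; ring
    have hzy := (pref_perm pref hPI hsb (Equiv.swap i j) x).2
    have hc2 := hConv _ _ hzy (1 - t) (by linarith) (by linarith)
    have hsum : ∑ m, b' m • x m =
        (1 - t) • (∑ m, b (Equiv.swap i j m) • x m) + (1 - (1 - t)) • (∑ m, b m • x m) := by
      rw [Finset.smul_sum, Finset.smul_sum, ← Finset.sum_add_distrib]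
      apply Finset.sum_congr rfl
      intro m _
      rw [hb'eq m, smul_smul, smul_smul, ← add_smul]
      congr 1
      ring
    rw [← hsum] at hc2
    -- recurse
    have hrec := ih a b' ha hb' hsa hsb' (by rw [htot, htotb']) hpart' hcard'
    exact htrans _ _ _ hrec hc2

end Main

open NaiveDivAux

/-- A permutation invariant and convex preference relation exhibits preference
for naive diversification: if `α ≤_m β` then `∑ αᵢ xᵢ ≿ ∑ βᵢ xᵢ`. -/
theorem permInvariant_convex_naiveDiv {X : Type*} [AddCommGroup X] [Module ℝ X]
    (pref : X → X → Prop)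
    (hcomplete : ∀ x y : X, pref x y ∨ pref y x)
    (htrans : ∀ x y z : X, pref x y → pref y z → pref x z)
    (hPI : PermInvariant pref) (hConv : ConvexPref pref) :
    ∀ (n : ℕ) (a b : Fin n → ℝ), a ∈ stdSimplex ℝ (Fin n) → b ∈ stdSimplex ℝ (Fin n) →
      Majorizes b a → ∀ x : Fin n → X,
        pref (∑ i, a i • x i) (∑ i, b i • x i) := by
  intro n a b hsa hsb hmaj x
  classical
  set τa : Equiv.Perm (Fin n) := Fin.revPerm.trans (Tuple.sort a) with hτa
  set τb : Equiv.Perm (Fin n) := Fin.revPerm.trans (Tuple.sort b) with hτb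
  set a' : Fin n → ℝ := fun m => a (τa m) with ha'
  set b' : Fin n → ℝ := fun m => b (τb m) with hb'
  have haanti : Antitone a' := by
    intro m m' h
    have := Tuple.monotone_sort a (show Fin.rev m' ≤ Fin.rev m by
      rw [Fin.rev_le_rev]; exact h)
    simpa [ha', hτa, Function.comp] using this
  have hbanti : Antitone b' := by
    intro m m' h
    have := Tuple.monotone_sort b (show Fin.rev m' ≤ Fin.rev m by
      rw [Fin.rev_le_rev]; exact h)
    simpa [hb', hτb, Function.comp] using this
  have hsa' : a' ∈ stdSimplex ℝ (Fin n) := simplex_comp_perm hsa τa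
  have hsb' : b' ∈ stdSimplex ℝ (Fin n) := simplex_comp_perm hsb τb
  have hta : ∑ i, a' i = ∑ i, a i := Equiv.sum_comp τa a
  have htb : ∑ i, b' i = ∑ i, b i := Equiv.sum_comp τb b
  have htot : ∑ i, a' i = ∑ i, b' i := by rw [hta, htb, ← hmaj.1]
  have htopa : ∀ k, topSum a' k = topSum a k := topSum_comp_perm a τa
  have htopb : ∀ k, topSum b' k = topSum b k := topSum_comp_perm b τb
  have hpart : ∀ k : ℕ, partSum a' k ≤ partSum b' k := by
    intro k
    by_cases hk0 : k = 0
    · subst hk0; rw [partSum_zero, partSum_zero]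
    by_cases hkn : n ≤ k
    · rw [partSum_of_le hkn, partSum_of_le hkn, htot]
    have hk1 : 1 ≤ k := Nat.one_le_iff_ne_zero.mpr hk0
    have hkn' : k ≤ n - 1 := by omega
    have hkle : k ≤ n := by omega
    calc partSum a' k ≤ topSum a' k := by
          rw [partSum]; exact le_topSum a' (card_filter_lt hkle)
      _ = topSum a k := htopa k
      _ ≤ topSum b k := hmaj.2 k hk1 hkn'
      _ = topSum b' k := (htopb k).symm
      _ = partSum b' k := topSum_of_antitone hbanti hkle
  have hmid := key pref htrans hcomplete hPI hConv x
    (Finset.univ.filter fun m => a' m ≠ b' m).card a' b' haanti hbanti hsa' hsb' htot hpart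
    (le_refl _)
  have h1 := (pref_perm pref hPI hsa τa x).1
  have h3 := (pref_perm pref hPI hsb τb x).2
  exact htrans _ _ _ (htrans _ _ _ h1 hmid) h3
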